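/- Let G be a graph of order n with diameter 2, minimum degree δ and maximum degree Δ. Then γ^t_StR(G) ≤ δ·(1 + ⌈(Δ−1)/2⌉) + 1. -/
import Mathlib


open Finset

variable {V : Type*} [Fintype V]

/-- The degree of a vertex. -/
noncomputable def degN (G : SimpleGraph V) (v : V) : ℕ := {u | G.Adj v u}.ncard

/-- Maximum degree. -/
noncomputable def maxDeg (G : SimpleGraph V) : ℕ := Finset.univ.sup (degN G)

/-- Minimum degree. -/
noncomputable def minDeg (G : SimpleGraph V) : ℕ := sInf {d | ∃ v, degN G v = d}

/-- No isolated vertex. -/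
def NoIsolated (G : SimpleGraph V) : Prop := ∀ v, ∃ u, G.Adj v u

/-- Total strong Roman dominating function. `(Δ+1)/2 = ⌈Δ/2⌉` and
`(m+1)/2 = ⌈m/2⌉` in natural-number arithmetic. -/
def IsTSRDF (G : SimpleGraph V) (f : V → ℕ) : Prop :=
  (∀ v, f v ≤ (maxDeg G + 1) / 2 + 1) ∧
  (∀ v, f v = 0 → ∃ u, G.Adj v u ∧
      1 + ({w | G.Adj u w ∧ f w = 0}.ncard + 1) / 2 ≤ f u) ∧
  (∀ v, 0 < f v → ∃ u, G.Adj v u ∧ 0 < f u)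

/-- The total strong Roman domination number. -/
noncomputable def tsrd (G : SimpleGraph V) : ℕ :=
  sInf {k | ∃ f : V → ℕ, IsTSRDF G f ∧ ∑ v, f v = k}

lemma degN_eq_card (G : SimpleGraph V) (v : V) [DecidableRel G.Adj] :
    degN G v = (univ.filter (fun u => G.Adj v u)).card := by
  rw [degN, Set.ncard_eq_toFinset_card']
  congr 1
  ext u; simp

lemma exists_adj_of_connected (G : SimpleGraph V) (hc : G.Connected) [Nontrivial V]
    (v : V) : ∃ u, G.Adj v u := by
  obtain ⟨w, hw⟩ := exists_ne v
  obtain ⟨p⟩ := hc.preconnected v w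
  cases p with
  | nil => exact absurd rfl hw.symm
  | cons h q => exact ⟨_, h⟩

theorem stmt6 (G : SimpleGraph V) (hc : G.Connected) (hd : G.diam = 2) :
    tsrd G ≤ minDeg G * (1 + maxDeg G / 2) + 1 := by
  classical
  have hdne : G.diam ≠ 0 := by omega
  haveI : Nontrivial V := G.nontrivial_of_diam_ne_zero hdne
  have hetop : G.ediam ≠ ⊤ := G.ediam_ne_top_of_diam_ne_zero hdne
  -- choose a vertex of minimum degree
  have hne : {d | ∃ v, degN G v = d}.Nonempty := ⟨degN G Classical.ofNonempty, _, rfl⟩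
  obtain ⟨v, hv⟩ : ∃ v, degN G v = minDeg G := Nat.sInf_mem hne
  set Δ := maxDeg G with hΔ
  set c : ℕ := 1 + Δ / 2 with hcdef
  set f : V → ℕ := fun u => if u = v then 1 else if G.Adj v u then c else 0 with hf
  have hfv : f v = 1 := by simp [hf]
  have hfadj : ∀ u, G.Adj v u → f u = c := by
    intro u hu
    have : u ≠ v := fun h => G.irrefl (h ▸ hu)
    simp [hf, this, hu]
  have hfz : ∀ u, u ≠ v → ¬ G.Adj v u → f u = 0 := by
    intro u h1 h2; simp [hf, h1, h2]
  have hdegle : ∀ u, degN G u ≤ Δ := fun u => Finset.le_sup (mem_univ u)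
  -- f is a TSRDF
  have hT : IsTSRDF G f := by
    refine ⟨?_, ?_, ?_⟩
    · intro u
      by_cases h1 : u = v
      · simp [hf, h1]
      · by_cases h2 : G.Adj v u
        · rw [hfadj u h2, hcdef]
          have : Δ / 2 ≤ (Δ + 1) / 2 := Nat.div_le_div_right (Nat.le_succ _)
          omega
        · rw [hfz u h1 h2]; omega
    · intro w hw
      have hwv : w ≠ v := by
        intro h; rw [h, hfv] at hw; omega
      have hnadj : ¬ G.Adj v w := by
        intro h; rw [hfadj w h] at hw; omega
      have hdist : G.dist v w = 2 := by
        have hle : G.dist v w ≤ 2 := hd ▸ G.dist_le_diam hetop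
        have h0 : G.dist v w ≠ 0 := by
          intro h
          exact hwv.symm (hc.dist_eq_zero_iff.mp h)
        have h1 : G.dist v w ≠ 1 := by
          intro h
          exact hnadj (SimpleGraph.dist_eq_one_iff_adj.mp h)
        omega
      obtain ⟨p, hp⟩ := (hc.preconnected v w).exists_walk_length_eq_dist
      rw [hdist] at hp
      cases p with
      | nil => simp at hp
      | cons h q =>
        rename_i b
        cases q with
        | nil => simp at hp
        | cons h' q' =>
          rename_i e
          simp only [SimpleGraph.Walk.length_cons] at hp
          have hq' : q'.length = 0 := by omega
          have hbw : G.Adj b w := by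
            cases q' with
            | nil => exact h'
            | cons _ _ => simp at hq'
          refine ⟨b, hbw.symm, ?_⟩
          rw [hfadj b h, hcdef]
          have hsub : {w' | G.Adj b w' ∧ f w' = 0} ⊂ {w' | G.Adj b w'} := by
            constructor
            · intro x hx; exact hx.1
            · intro hsub'
              have hv' : v ∈ {w' | G.Adj b w'} := h.symm
              have := hsub' hv'
              rw [Set.mem_setOf_eq, hfv] at this
              omega
          have hfin : {w' | G.Adj b w'}.Finite := Set.toFinite _
          have hlt : {w' | G.Adj b w' ∧ f w' = 0}.ncard < degN G b :=
            Set.ncard_lt_ncard hsub hfin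
          have hm : {w' | G.Adj b w' ∧ f w' = 0}.ncard + 1 ≤ Δ := by
            have := hdegle b; omega
          have : ({w' | G.Adj b w' ∧ f w' = 0}.ncard + 1) / 2 ≤ Δ / 2 :=
            Nat.div_le_div_right hm
          omega
    · intro u hu
      by_cases h1 : u = v
      · obtain ⟨x, hx⟩ := exists_adj_of_connected G hc v
        refine ⟨x, h1 ▸ hx, ?_⟩
        rw [hfadj x hx, hcdef]; omega
      · have h2 : G.Adj v u := by
          by_contra h2
          rw [hfz u h1 h2] at hu; omega
        exact ⟨v, h2.symm, by rw [hfv]; omega⟩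
  -- compute the weight of f
  have hsum : ∑ u, f u = 1 + degN G v * c := by
    rw [← Finset.add_sum_erase _ f (mem_univ v), hfv]
    congr 1
    have : ∀ u ∈ univ.erase v, f u = if G.Adj v u then c else 0 := by
      intro u hu
      rw [Finset.mem_erase] at hu
      simp [hf, hu.1]
    rw [Finset.sum_congr rfl this, Finset.sum_ite, Finset.sum_const,
      Finset.sum_const_zero, add_zero, smul_eq_mul, degN_eq_card]
    congr 2
    ext u
    simp only [Finset.mem_filter, Finset.mem_erase, mem_univ, true_and, and_true]
    constructor
    · rintro ⟨_, h⟩; exact h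
    · intro h; exact ⟨fun he => G.irrefl (he ▸ h), h⟩
  apply Nat.sInf_le
  refine ⟨f, hT, ?_⟩
  rw [hsum, hv]
  ring
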